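/- Under the hypotheses of the previous construction (λ₀,…,λ_N distinct in an interval I, weight ρ positive on I with ∫_I R/ρ = ∑_k R(λ_k) for all R of degree ≤ 2N+1), the map M : L²(I, ρ dv) → L²(I, ρ dv) defined by Mf = ∑_{i=0}^N (∫_I v^i f(v) dv) · T̃_i(v)/ρ(v) is a well-defined bounded linear projection (M∘M = M) which is self-adjoint for the inner product φ(f,g) = ∫_I f g ρ dv. -/

import Mathlib

open Matrix MeasureTheory RealInnerProductSpace

/-- The Maxwellian `Mf = ∑_i (∫ v^i f dv) T̃_i(v)/ρ(v)` defines a bounded linear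
projection on `L²(I, ρ dv)` which is self-adjoint for `φ(f,g) = ∫ f g ρ dv`. -/
theorem maxwellian_projection (N : ℕ) (I : Set ℝ) (hI : MeasurableSet I)
    (lam : Fin (N+1) → ℝ) (hinj : Function.Injective lam) (hlamI : ∀ k, lam k ∈ I)
    (ρ : ℝ → ℝ) (hρ : ∀ v ∈ I, 0 < ρ v) (hmeas : Measurable ρ)
    (hint : ∀ j ≤ 2*N+1, Integrable (fun v => v ^ j / ρ v) (volume.restrict I))
    (hquad : ∀ R : Polynomial ℝ, R.natDegree ≤ 2*N+1 →
      ∫ v in I, R.eval v / ρ v = ∑ k, R.eval (lam k))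
    (P : Matrix (Fin (N+1)) (Fin (N+1)) ℝ) (hP : ∀ i j, P i j = lam j ^ (i:ℕ))
    (Ttil : Fin (N+1) → ℝ → ℝ)
    (hT : ∀ i v, Ttil i v = ∑ k : Fin (N+1), ((Pᵀ)⁻¹ * P⁻¹) k i * v ^ (k:ℕ)) :
    ∃ M : Lp ℝ 2 ((volume.restrict I).withDensity (fun v => ENNReal.ofReal (ρ v))) →L[ℝ]
          Lp ℝ 2 ((volume.restrict I).withDensity (fun v => ENNReal.ofReal (ρ v))),
      (∀ f, (M f : ℝ → ℝ)
          =ᵐ[(volume.restrict I).withDensity (fun v => ENNReal.ofReal (ρ v))]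
        fun v => ∑ i : Fin (N+1), (∫ w in I, w ^ (i:ℕ) * f w) * Ttil i v / ρ v) ∧
      (∀ f, M (M f) = M f) ∧
      (∀ f g, ⟪M f, g⟫ = ⟪f, M g⟫) := by
  classical
  set μ : Measure ℝ := (volume.restrict I).withDensity (fun v => ENNReal.ofReal (ρ v)) with hμ
  have hwmeas : Measurable fun v => ENNReal.ofReal (ρ v) := hmeas.ennreal_ofReal
  have haeI : ∀ᵐ v ∂(volume.restrict I), v ∈ I := ae_restrict_mem hI
  have hac : μ ≪ volume.restrict I := withDensity_absolutelyContinuous _ _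
  have haeIμ : ∀ᵐ v ∂μ, v ∈ I := hac.ae_le haeI
  set Q : Matrix (Fin (N+1)) (Fin (N+1)) ℝ := (Pᵀ)⁻¹ * P⁻¹ with hQdef
  set h : Fin (N+1) → ℝ → ℝ := fun i v => v ^ (i:ℕ) / ρ v with hh
  have hmeash : ∀ i, Measurable (h i) := fun i => (measurable_id.pow_const _).div hmeas
  -- computing integrals against μ
  have hintegral : ∀ g : ℝ → ℝ, ∫ v, g v ∂μ = ∫ v in I, ((ρ v).toNNReal : ℝ) • g v := by
    intro g
    rw [hμ]
    exact integral_withDensity_eq_integral_smul (f := fun v => (ρ v).toNNReal)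
      hmeas.real_toNNReal g
  -- membership in L²
  have hmem : ∀ i : Fin (N+1), MemLp (h i) 2 μ := by
    intro i
    rw [memLp_two_iff_integrable_sq ((hmeash i).aestronglyMeasurable)]
    rw [integrable_withDensity_iff hwmeas
      (Filter.Eventually.of_forall fun _ => ENNReal.ofReal_lt_top)]
    apply (hint (2*(i:ℕ)) (by omega)).congr
    filter_upwards [haeI] with v hv
    have h0 : ρ v ≠ 0 := (hρ v hv).ne'
    rw [ENNReal.toReal_ofReal (hρ v hv).le]
    simp only [hh]
    field_simp
    ring
  set H : Fin (N+1) → Lp ℝ 2 μ := fun i => (hmem i).toLp (h i) with hHdef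
  set G : Fin (N+1) → Lp ℝ 2 μ := fun i => ∑ k, Q k i • H k with hGdef
  -- inner product of H i with anything
  have hinnerf : ∀ (i : Fin (N+1)) (f : Lp ℝ 2 μ), ⟪H i, f⟫ = ∫ w in I, w ^ (i:ℕ) * f w := by
    intro i f
    rw [L2.inner_def]
    have h1 : ∫ a, ⟪H i a, f a⟫ ∂μ = ∫ a, h i a * f a ∂μ := by
      apply integral_congr_ae
      filter_upwards [(hmem i).coeFn_toLp] with v hv
      rw [hv]; simp [RCLike.inner_apply, mul_comm]
    rw [h1, hintegral]
    apply integral_congr_ae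
    filter_upwards [haeI] with v hv
    have h0 : ρ v ≠ 0 := (hρ v hv).ne'
    rw [smul_eq_mul, Real.coe_toNNReal _ (hρ v hv).le]
    simp only [hh, smul_eq_mul]
    field_simp
  -- Gram matrix
  have hGram : ∀ i k : Fin (N+1), ⟪H i, H k⟫ = (P * Pᵀ) i k := by
    intro i k
    rw [L2.inner_def]
    have h1 : ∫ a, ⟪H i a, H k a⟫ ∂μ = ∫ a, h i a * h k a ∂μ := by
      apply integral_congr_ae
      filter_upwards [(hmem i).coeFn_toLp, (hmem k).coeFn_toLp] with v hv hv'
      rw [hv, hv']; simp [RCLike.inner_apply, mul_comm]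
    rw [h1, hintegral]
    have h2 : ∫ v in I, ((ρ v).toNNReal : ℝ) • (h i v * h k v)
        = ∫ v in I, (Polynomial.X ^ ((i:ℕ) + (k:ℕ)) : Polynomial ℝ).eval v / ρ v := by
      apply integral_congr_ae
      filter_upwards [haeI] with v hv
      have h0 : ρ v ≠ 0 := (hρ v hv).ne'
      rw [smul_eq_mul, Real.coe_toNNReal _ (hρ v hv).le]
      simp only [hh, smul_eq_mul, Polynomial.eval_pow, Polynomial.eval_X]
      rw [pow_add]
      field_simp
    rw [h2, hquad _ (by rw [Polynomial.natDegree_X_pow]; omega)]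
    simp only [Polynomial.eval_pow, Polynomial.eval_X, Matrix.mul_apply, hP,
      Matrix.transpose_apply]
    exact Finset.sum_congr rfl fun j _ => (pow_add _ _ _)
  -- P invertible
  have hPdet : IsUnit P.det := by
    have hPv : P = (Matrix.vandermonde lam)ᵀ := by
      ext i j; simp [hP, Matrix.vandermonde]
    rw [hPv, Matrix.det_transpose]
    exact isUnit_iff_ne_zero.mpr (Matrix.det_vandermonde_ne_zero_iff.mpr hinj)
  have hQG : (P * Pᵀ) * Q = 1 := by
    rw [hQdef, Matrix.mul_assoc, ← Matrix.mul_assoc Pᵀ,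
      Matrix.mul_nonsing_inv _ (by rwa [Matrix.det_transpose]), Matrix.one_mul,
      Matrix.mul_nonsing_inv _ hPdet]
  have hQsymm : Qᵀ = Q := by
    rw [hQdef, Matrix.transpose_mul, Matrix.transpose_nonsing_inv,
      Matrix.transpose_nonsing_inv, Matrix.transpose_transpose]
  have hQsymm' : ∀ a b, Q a b = Q b a := fun a b => by
    rw [← Matrix.transpose_apply Q b a, hQsymm]
  have hHG : ∀ i j : Fin (N+1), ⟪H i, G j⟫ = (1 : Matrix (Fin (N+1)) (Fin (N+1)) ℝ) i j := by
    intro i j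
    have e : G j = ∑ k, Q k j • H k := rfl
    rw [e, inner_sum]
    have h1 : ∀ k : Fin (N+1), ⟪H i, Q k j • H k⟫ = (P * Pᵀ) i k * Q k j := by
      intro k
      rw [real_inner_smul_right, hGram]; ring
    rw [Finset.sum_congr rfl fun k _ => h1 k, ← Matrix.mul_apply, hQG]
  -- the operator
  set M : Lp ℝ 2 μ →L[ℝ] Lp ℝ 2 μ :=
    ∑ i, (innerSL ℝ (H i)).smulRight (G i) with hMdef
  have hMf : ∀ f, M f = ∑ i, ⟪H i, f⟫ • G i := by
    intro f
    rw [hMdef]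
    simp [ContinuousLinearMap.sum_apply, ContinuousLinearMap.smulRight_apply]
  -- coeFn of finite sums of smul
  have hcoe : ∀ (c : Fin (N+1) → ℝ) (u : Fin (N+1) → Lp ℝ 2 μ) (s : Finset (Fin (N+1))),
      ((∑ i ∈ s, c i • u i : Lp ℝ 2 μ) : ℝ → ℝ) =ᵐ[μ]
        fun v => ∑ i ∈ s, c i * (u i : ℝ → ℝ) v := by
    intro c u s
    induction s using Finset.induction_on with
    | empty =>
      simp only [Finset.sum_empty]
      exact (Lp.coeFn_zero ℝ 2 μ).trans (Filter.EventuallyEq.of_eq (by funext v; simp))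
    | @insert a s ha ih =>
      simp only [Finset.sum_insert ha]
      filter_upwards [Lp.coeFn_add (c a • u a) (∑ i ∈ s, c i • u i),
        Lp.coeFn_smul (c a) (u a), ih] with v h1 h2 h3
      simp only [h1, Pi.add_apply, h2, Pi.smul_apply, smul_eq_mul, h3]
  have hHfun : ∀ᵐ v ∂μ, ∀ k, (H k : ℝ → ℝ) v = h k v :=
    ae_all_iff.mpr fun k => (hmem k).coeFn_toLp
  have hGone : ∀ i, ((G i : Lp ℝ 2 μ) : ℝ → ℝ) =ᵐ[μ] fun v => Ttil i v / ρ v := by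
    intro i
    have e : G i = ∑ k, Q k i • H k := rfl
    rw [e]
    refine (hcoe (fun k => Q k i) H Finset.univ).trans ?_
    filter_upwards [hHfun] with v hv
    simp only [hv, hh, hT i v, Finset.sum_div]
    exact Finset.sum_congr rfl fun k _ => (mul_div_assoc _ _ _).symm
  refine ⟨M, ?_, ?_, ?_⟩
  · -- representation
    intro f
    rw [hMf f]
    refine ((hcoe (fun i => ⟪H i, f⟫) G Finset.univ).trans ?_)
    filter_upwards [ae_all_iff.mpr hGone] with v hv
    simp only [hv]
    refine Finset.sum_congr rfl fun i _ => ?_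
    rw [hinnerf i f, mul_div_assoc]
  · -- projection
    intro f
    have key : ∀ j, ⟪H j, M f⟫ = ⟪H j, f⟫ := by
      intro j
      rw [hMf f, inner_sum]
      have h1 : ∀ i : Fin (N+1), ⟪H j, ⟪H i, f⟫ • G i⟫
          = (if j = i then (1:ℝ) else 0) * ⟪H i, f⟫ := by
        intro i
        rw [real_inner_smul_right, hHG, Matrix.one_apply]; ring
      rw [Finset.sum_congr rfl fun i _ => h1 i]
      simp
    rw [hMf (M f), Finset.sum_congr rfl fun j _ => by rw [key j], ← hMf f]
  · -- self-adjoint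
    intro f g
    have expand : ∀ (x : Lp ℝ 2 μ) (i : Fin (N+1)), ⟪G i, x⟫ = ∑ k, Q k i * ⟪H k, x⟫ := by
      intro x i
      have e : G i = ∑ k, Q k i • H k := rfl
      rw [e, sum_inner]
      exact Finset.sum_congr rfl fun k _ => real_inner_smul_left _ _ _
    rw [hMf f, hMf g, sum_inner, inner_sum]
    have e1 : ∀ i : Fin (N+1), ⟪⟪H i, f⟫ • G i, g⟫
        = ∑ k, Q k i * (⟪H i, f⟫ * ⟪H k, g⟫) := by
      intro i
      rw [real_inner_smul_left, expand g i, Finset.mul_sum]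
      exact Finset.sum_congr rfl fun k _ => by ring
    have e2 : ∀ i : Fin (N+1), ⟪f, ⟪H i, g⟫ • G i⟫
        = ∑ k, Q k i * (⟪H k, f⟫ * ⟪H i, g⟫) := by
      intro i
      rw [real_inner_smul_right, real_inner_comm (G i) f, expand f i, Finset.mul_sum]
      exact Finset.sum_congr rfl fun k _ => by ring
    rw [Finset.sum_congr rfl fun i _ => e1 i, Finset.sum_congr rfl fun i _ => e2 i,
      Finset.sum_comm]
    refine Finset.sum_congr rfl fun i _ => Finset.sum_congr rfl fun k _ => ?_
    rw [hQsymm' k i]
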